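/- In a category satisfying axioms (J1)-(J4) but not necessarily the cube axiom, for any morphism p : E → B one has Wsecat(p) ≤ Gsecat(p). -/

import Mathlib

open CategoryTheory CategoryTheory.Limits ZeroObject

universe v u v' u'

variable (C : Type u) [Category.{v} C] [HasZeroObject C] [HasZeroMorphisms C]

/-- A category satisfying axioms (J1)-(J4) of Doeraene's J-categories:
a pointed category with fibrations, cofibrations and weak equivalences. -/
structure PreJCat where
  fib : MorphismProperty C
  cofib : MorphismProperty C
  weq : MorphismProperty C
  /-- (J1) isomorphisms are trivial cofibrations -/
  iso_triv_cofib : ∀ {X Y : C} (f : X ⟶ Y), IsIso f → cofib f ∧ weq f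
  /-- (J1) isomorphisms are trivial fibrations -/
  iso_triv_fib : ∀ {X Y : C} (f : X ⟶ Y), IsIso f → fib f ∧ weq f
  fib_comp : ∀ {X Y Z : C} {f : X ⟶ Y} {g : Y ⟶ Z}, fib f → fib g → fib (f ≫ g)
  cofib_comp : ∀ {X Y Z : C} {f : X ⟶ Y} {g : Y ⟶ Z}, cofib f → cofib g → cofib (f ≫ g)
  /-- (J1) two-out-of-three for weak equivalences -/
  weq_comp : ∀ {X Y Z : C} {f : X ⟶ Y} {g : Y ⟶ Z}, weq f → weq g → weq (f ≫ g)
  weq_of_comp_left : ∀ {X Y Z : C} {f : X ⟶ Y} {g : Y ⟶ Z}, weq g → weq (f ≫ g) → weq f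
  weq_of_comp_right : ∀ {X Y Z : C} {f : X ⟶ Y} {g : Y ⟶ Z}, weq f → weq (f ≫ g) → weq g
  /-- (J2) pullbacks of fibrations exist, and the base extension is a fibration -/
  pb_exists : ∀ {E B B' : C} (p : E ⟶ B) (f : B' ⟶ B), fib p →
    ∃ (P : C) (fb : P ⟶ E) (pb : P ⟶ B'), IsPullback fb pb p f ∧ fib pb
  /-- (J2) base extensions of weak equivalences along fibrations are weak equivalences -/
  pb_weq : ∀ {E B B' P : C} {p : E ⟶ B} {f : B' ⟶ B} {fb : P ⟶ E} {pb : P ⟶ B'},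
    fib p → IsPullback fb pb p f → (weq f → weq fb) ∧ (weq p → weq pb)
  /-- (J2) dual: pushouts of cofibrations exist -/
  po_exists : ∀ {A X Y : C} (i : A ⟶ X) (g : A ⟶ Y), cofib i →
    ∃ (Q : C) (inl : X ⟶ Q) (inr : Y ⟶ Q), IsPushout i g inl inr ∧ cofib inr
  po_weq : ∀ {A X Y Q : C} {i : A ⟶ X} {g : A ⟶ Y} {inl : X ⟶ Q} {inr : Y ⟶ Q},
    cofib i → IsPushout i g inl inr → (weq g → weq inl) ∧ (weq i → weq inr)
  /-- (J3) F-factorizations exist -/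
  F_fac : ∀ {X Y : C} (f : X ⟶ Y), ∃ (Z : C) (τ : X ⟶ Z) (q : Z ⟶ Y),
    weq τ ∧ fib q ∧ τ ≫ q = f
  /-- (J3) C-factorizations exist -/
  C_fac : ∀ {X Y : C} (f : X ⟶ Y), ∃ (Z : C) (i : X ⟶ Z) (σ : Z ⟶ Y),
    cofib i ∧ weq σ ∧ i ≫ σ = f
  /-- (J4) cofibrant replacements exist -/
  cof_replace : ∀ X : C, ∃ (Xb : C) (q : Xb ⟶ X), fib q ∧ weq q ∧
    (∀ {E : C} (p : E ⟶ Xb), fib p → weq p → ∃ s : Xb ⟶ E, s ≫ p = 𝟙 Xb)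

variable {C}

namespace PreJCat

/-- An object is a cofibrant model if every trivial fibration onto it admits a section. -/
def CofModel (P : PreJCat C) (X : C) : Prop :=
  ∀ {E : C} (p : E ⟶ X), P.fib p → P.weq p → ∃ s : X ⟶ E, s ≫ p = 𝟙 X

/-- An object is e-fibrant if the morphism to the zero object is a fibration. -/
def EFibrant (P : PreJCat C) (X : C) : Prop := P.fib (0 : X ⟶ 0)

/-- `f` admits a weak lifting along `g` (all objects being cofibrant models). -/
def WeakLifting (P : PreJCat C) {A B Cc : C} (f : A ⟶ B) (g : Cc ⟶ B) : Prop :=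
  ∃ (E : C) (τ : Cc ⟶ E) (q : E ⟶ B), P.weq τ ∧ P.fib q ∧ τ ≫ q = g ∧
    ∃ s : A ⟶ E, s ≫ q = f

/-- `g` admits a weak section. -/
def HasWeakSection (P : PreJCat C) {E B : C} (g : E ⟶ B) : Prop :=
  P.WeakLifting (𝟙 B) g

/-- `j : J ⟶ B` is a join morphism of `f : A ⟶ B` and `g : Cc ⟶ B`: built from an
F-factorization of `g`, a pullback, a C-factorization and a pushout. -/
def IsJoin (P : PreJCat C) {A Cc B J : C} (f : A ⟶ B) (g : Cc ⟶ B) (j : J ⟶ B) : Prop :=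
  ∃ (E : C) (τ : Cc ⟶ E) (q : E ⟶ B), P.weq τ ∧ P.fib q ∧ τ ≫ q = g ∧
  ∃ (E' Z : C) (fbar : E' ⟶ E) (pbar : E' ⟶ A) (i : E' ⟶ Z) (σ : Z ⟶ E)
    (a : A ⟶ J) (bz : Z ⟶ J),
    IsPullback fbar pbar q f ∧ P.cofib i ∧ P.weq σ ∧ i ≫ σ = fbar ∧
    IsPushout pbar i a bz ∧ a ≫ j = f ∧ bz ≫ j = σ ≫ q

/-- `IsIterJoin P p n h` : `h` is an `n`-th iterated join morphism `*ⁿ_B E ⟶ B` of `p`. -/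
inductive IsIterJoin (P : PreJCat C) {E B : C} (p : E ⟶ B) : ℕ → ∀ {X : C}, (X ⟶ B) → Prop
  | zero : IsIterJoin P p 0 p
  | succ {n : ℕ} {X Y : C} {h : X ⟶ B} {h' : Y ⟶ B} :
      IsIterJoin P p n h → P.IsJoin h p h' → IsIterJoin P p (n + 1) h'

/-- The Ganea-type sectional category of a morphism. -/
noncomputable def Gsecat (P : PreJCat C) {E B : C} (p : E ⟶ B) : ℕ∞ :=
  sInf {n : ℕ∞ | ∃ m : ℕ, n = (m : ℕ∞) ∧
    ∃ (X : C) (h : X ⟶ B), P.IsIterJoin p m h ∧ P.HasWeakSection h}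

end PreJCat

/-- `p1, p2` exhibit `Pd` as a binary product of `X` and `Y`. -/
def IsBinProd {X Y Pd : C} (p1 : Pd ⟶ X) (p2 : Pd ⟶ Y) : Prop :=
  Nonempty (IsLimit (BinaryFan.mk p1 p2))

namespace PreJCat

/-- `IsFatWedge P p n j Δ` : `j : Tⁿ(p) ⟶ B^{n+1}` is an `n`-th fat wedge morphism of `p`
together with the diagonal `Δ : B ⟶ B^{n+1}`. -/
inductive IsFatWedge (P : PreJCat C) {E B : C} (p : E ⟶ B) :
    ℕ → ∀ {T Pw : C}, (T ⟶ Pw) → (B ⟶ Pw) → Prop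
  | zero : IsFatWedge P p 0 p (𝟙 B)
  | succ {n : ℕ} {T Pn : C} {j : T ⟶ Pn} {Δ : B ⟶ Pn}
      (hprev : IsFatWedge P p n j Δ)
      {Pn1 : C} {pr1 : Pn1 ⟶ Pn} {pr2 : Pn1 ⟶ B} (hP : IsBinProd pr1 pr2)
      {TB : C} {q1 : TB ⟶ T} {q2 : TB ⟶ B} (hTB : IsBinProd q1 q2)
      {PE : C} {r1 : PE ⟶ Pn} {r2 : PE ⟶ E} (hPE : IsBinProd r1 r2)
      {jB : TB ⟶ Pn1} (hjB : jB ≫ pr1 = q1 ≫ j ∧ jB ≫ pr2 = q2)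
      {pP : PE ⟶ Pn1} (hpP : pP ≫ pr1 = r1 ∧ pP ≫ pr2 = r2 ≫ p)
      {Tn1 : C} {j' : Tn1 ⟶ Pn1} (hjoin : P.IsJoin jB pP j')
      {Δ' : B ⟶ Pn1} (hΔ : Δ' ≫ pr1 = Δ ∧ Δ' ≫ pr2 = 𝟙 B) :
      IsFatWedge P p (n + 1) j' Δ'

/-- The Whitehead-type sectional category of a morphism with e-fibrant codomain. -/
noncomputable def WsecatE (P : PreJCat C) {E B : C} (p : E ⟶ B) : ℕ∞ :=
  sInf {n : ℕ∞ | ∃ m : ℕ, n = (m : ℕ∞) ∧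
    ∃ (T Pw : C) (j : T ⟶ Pw) (Δ : B ⟶ Pw), P.IsFatWedge p m j Δ ∧ P.WeakLifting Δ j}

/-- The Whitehead-type sectional category of an arbitrary morphism, via e-fibrant
replacements of the codomain. -/
noncomputable def Wsecat (P : PreJCat C) {E B : C} (p : E ⟶ B) : ℕ∞ :=
  ⨅ (F : C) (τ : B ⟶ F) (_ : P.weq τ ∧ P.EFibrant F), P.WsecatE (p ≫ τ)

/-- A commutative square is a homotopy pullback. -/
def IsHPB (P : PreJCat C) {D A Cc B : C} (f' : D ⟶ Cc) (g' : D ⟶ A)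
    (g : Cc ⟶ B) (f : A ⟶ B) : Prop :=
  f' ≫ g = g' ≫ f ∧ ∃ (E : C) (τ : Cc ⟶ E) (q : E ⟶ B), P.weq τ ∧ P.fib q ∧ τ ≫ q = g ∧
    ∃ (Pt : C) (pr1 : Pt ⟶ E) (pr2 : Pt ⟶ A), IsPullback pr1 pr2 q f ∧
      ∃ w : D ⟶ Pt, P.weq w ∧ w ≫ pr1 = f' ≫ τ ∧ w ≫ pr2 = g'

/-- A commutative square is a homotopy pushout. -/
def IsHPO (P : PreJCat C) {A B Cc D : C} (f : A ⟶ B) (g : A ⟶ Cc)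
    (i' : B ⟶ D) (j' : Cc ⟶ D) : Prop :=
  f ≫ i' = g ≫ j' ∧ ∃ (Z : C) (i : A ⟶ Z) (σ : Z ⟶ B), P.cofib i ∧ P.weq σ ∧ i ≫ σ = f ∧
    ∃ (Q : C) (inl : Z ⟶ Q) (inr : Cc ⟶ Q), IsPushout i g inl inr ∧
      ∃ w : Q ⟶ D, P.weq w ∧ inl ≫ w = σ ≫ i' ∧ inr ≫ w = j'

/-- `A-A'-B'-B` is a weak pullback over `b : B ⟶ B'` (all objects cofibrant models). -/
def IsWeakPullback (P : PreJCat C) {A B A' B' : C}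
    (f : A ⟶ B) (f' : A' ⟶ B') (b : B ⟶ B') : Prop :=
  ∃ (X : C) (τ : A' ⟶ X) (q : X ⟶ B'), P.weq τ ∧ P.fib q ∧ τ ≫ q = f' ∧
    ∃ x : A ⟶ X, P.IsHPB x f q b

/-- `g : G ⟶ B` is an `n`-th Ganea map of `B`: the `n`-th iterated join of `0 ⟶ B`. -/
def IsGaneaMap (P : PreJCat C) (B : C) (n : ℕ) {G : C} (g : G ⟶ B) : Prop :=
  P.IsIterJoin (0 : (0 : C) ⟶ B) n g

/-- The Lusternik-Schnirelmann category of an object. -/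
noncomputable def catObj (P : PreJCat C) (B : C) : ℕ∞ :=
  sInf {n : ℕ∞ | ∃ m : ℕ, n = (m : ℕ∞) ∧
    ∃ (G : C) (g : G ⟶ B), P.IsGaneaMap B m g ∧ P.HasWeakSection g}

/-- The Lusternik-Schnirelmann category of a morphism `b : B ⟶ B'`:
least `n` such that `b` admits a weak lifting along the `n`-th Ganea map of `B'`. -/
noncomputable def catMor (P : PreJCat C) {B B' : C} (b : B ⟶ B') : ℕ∞ :=
  sInf {n : ℕ∞ | ∃ m : ℕ, n = (m : ℕ∞) ∧
    ∃ (G : C) (g : G ⟶ B'), P.IsGaneaMap B' m g ∧ P.WeakLifting b g}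

/-- One step of a zigzag: a weak equivalence of morphisms in the arrow category. -/
def MorWeqStep (P : PreJCat C) (u v : Arrow C) : Prop :=
  ∃ h : u ⟶ v, P.weq h.left ∧ P.weq h.right

/-- Two morphisms are weakly equivalent: joined by a finite zigzag of weak
equivalences of morphisms. -/
def WeaklyEquivMor (P : PreJCat C) (u v : Arrow C) : Prop :=
  Relation.EqvGen P.MorWeqStep u v

def ObjWeqStep (P : PreJCat C) (X Y : C) : Prop := ∃ f : X ⟶ Y, P.weq f

/-- Two objects are weakly equivalent: joined by a finite zigzag of weak equivalences. -/
def WeaklyEquivObj (P : PreJCat C) (X Y : C) : Prop :=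
  Relation.EqvGen P.ObjWeqStep X Y

/-- The abstract topological complexity of an e-fibrant object:
the sectional category of the diagonal `B ⟶ B × B`. -/
noncomputable def TCE (P : PreJCat C) (B : C) : ℕ∞ :=
  ⨅ (Pd : C) (p1 : Pd ⟶ B) (p2 : Pd ⟶ B) (_ : IsBinProd p1 p2)
    (Δ : B ⟶ Pd) (_ : Δ ≫ p1 = 𝟙 B ∧ Δ ≫ p2 = 𝟙 B), P.Gsecat Δ

/-- The abstract topological complexity of an arbitrary object, via e-fibrant
replacements. -/
noncomputable def TC (P : PreJCat C) (B : C) : ℕ∞ :=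
  ⨅ (F : C) (τ : B ⟶ F) (_ : P.weq τ ∧ P.EFibrant F), P.TCE F

end PreJCat

variable (C)

/-- A J-category: (J1)-(J4) together with the cube axiom (J5). -/
structure JCat extends PreJCat C where
  /-- (J5) the cube axiom: in a commutative cube whose bottom face is a homotopy
  pushout and whose vertical faces are homotopy pullbacks, the top face is a
  homotopy pushout. -/
  cube : ∀ {X00 X01 X10 X11 Y00 Y01 Y10 Y11 : C}
    {tf : X00 ⟶ X01} {tg : X00 ⟶ X10} {ti : X01 ⟶ X11} {tj : X10 ⟶ X11}
    {bf : Y00 ⟶ Y01} {bg : Y00 ⟶ Y10} {bi : Y01 ⟶ Y11} {bj : Y10 ⟶ Y11}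
    {v00 : X00 ⟶ Y00} {v01 : X01 ⟶ Y01} {v10 : X10 ⟶ Y10} {v11 : X11 ⟶ Y11},
    tf ≫ ti = tg ≫ tj →
    toPreJCat.IsHPO bf bg bi bj →
    toPreJCat.IsHPB tf v00 v01 bf →
    toPreJCat.IsHPB tg v00 v10 bg →
    toPreJCat.IsHPB ti v01 v11 bi →
    toPreJCat.IsHPB tj v10 v11 bj →
    toPreJCat.IsHPO tf tg ti tj

variable {C}

/-- A modelization functor: preserves weak equivalences, homotopy pullbacks and
homotopy pushouts. -/
structure ModelizationFunctor {D : Type u'} [Category.{v'} D] [HasZeroObject D]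
    [HasZeroMorphisms D] (P : PreJCat C) (Q : PreJCat D) where
  F : C ⥤ D
  map_weq : ∀ {X Y : C} (f : X ⟶ Y), P.weq f → Q.weq (F.map f)
  map_hpb : ∀ {Dd A Cc B : C} {f' : Dd ⟶ Cc} {g' : Dd ⟶ A} {g : Cc ⟶ B} {f : A ⟶ B},
    P.IsHPB f' g' g f → Q.IsHPB (F.map f') (F.map g') (F.map g) (F.map f)
  map_hpo : ∀ {A B Cc Dd : C} {f : A ⟶ B} {g : A ⟶ Cc} {i' : B ⟶ Dd} {j' : Cc ⟶ Dd},
    P.IsHPO f g i' j' → Q.IsHPO (F.map f) (F.map g) (F.map i') (F.map j')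

section Auxiliary

lemma eqToZero {X : C} (f g : X ⟶ (0 : C)) : f = g :=
  (isZero_zero C).eq_of_tgt f g

/-- A pullback over the zero object is a binary product. -/
lemma isBinProd_of_isPullback_zero {X Y Pd : C} {p1 : Pd ⟶ X} {p2 : Pd ⟶ Y}
    {f : X ⟶ (0 : C)} {g : Y ⟶ (0 : C)} (h : IsPullback p1 p2 f g) : IsBinProd p1 p2 := by
  refine ⟨BinaryFan.IsLimit.mk _ (fun a b => h.lift a b (eqToZero _ _))
    (fun a b => h.lift_fst a b (eqToZero _ _)) (fun a b => h.lift_snd a b (eqToZero _ _)) ?_⟩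
  intro T a b m h1 h2
  simp only [BinaryFan.mk_fst, BinaryFan.mk_snd] at h1 h2
  apply h.hom_ext
  · show m ≫ p1 = h.lift a b (eqToZero _ _) ≫ p1
    rw [h.lift_fst]; exact h1
  · show m ≫ p2 = h.lift a b (eqToZero _ _) ≫ p2
    rw [h.lift_snd]; exact h2

lemma IsBinProd.lift' {X Y Pd W : C} {p1 : Pd ⟶ X} {p2 : Pd ⟶ Y} (h : IsBinProd p1 p2)
    (a : W ⟶ X) (b : W ⟶ Y) : ∃ l : W ⟶ Pd, l ≫ p1 = a ∧ l ≫ p2 = b := by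
  obtain ⟨hL⟩ := h
  exact ⟨hL.lift (BinaryFan.mk a b), by simpa using hL.fac (BinaryFan.mk a b) ⟨WalkingPair.left⟩,
    by simpa using hL.fac (BinaryFan.mk a b) ⟨WalkingPair.right⟩⟩

lemma IsBinProd.ext {X Y Pd W : C} {p1 : Pd ⟶ X} {p2 : Pd ⟶ Y} (h : IsBinProd p1 p2)
    {k l : W ⟶ Pd} (h1 : k ≫ p1 = l ≫ p1) (h2 : k ≫ p2 = l ≫ p2) : k = l := by
  obtain ⟨hL⟩ := h
  exact BinaryFan.IsLimit.hom_ext hL h1 h2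

/-- Given products `P = X × Y` and `Q = X × Z`, a map `g : Z ⟶ Y`, the square
whose top is the induced map `Q ⟶ P` over `g` is a pullback. -/
lemma isPullback_of_binProds {X Y Z P Q : C} {π1 : P ⟶ X} {π2 : P ⟶ Y}
    (hP : IsBinProd π1 π2) {ρ1 : Q ⟶ X} {ρ2 : Q ⟶ Z} (hQ : IsBinProd ρ1 ρ2)
    (g : Z ⟶ Y) {m : Q ⟶ P} (h1 : m ≫ π1 = ρ1) (h2 : m ≫ π2 = ρ2 ≫ g) :
    IsPullback m ρ2 π2 g := by
  obtain ⟨hPL⟩ := hP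
  refine IsPullback.of_isLimit (PullbackCone.IsLimit.mk h2
    (fun s => (hQ.lift' (s.fst ≫ π1) s.snd).choose) ?_ ?_ ?_)
  · intro s
    obtain ⟨hl1, hl2⟩ := (hQ.lift' (s.fst ≫ π1) s.snd).choose_spec
    apply BinaryFan.IsLimit.hom_ext hPL
    · simpa [h1, hl1] using rfl
    · show (_ ≫ m) ≫ π2 = s.fst ≫ π2
      rw [Category.assoc, h2, ← Category.assoc, hl2, s.condition]
  · intro s
    exact (hQ.lift' (s.fst ≫ π1) s.snd).choose_spec.2
  · intro s t ht1 ht2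
    obtain ⟨hl1, hl2⟩ := (hQ.lift' (s.fst ≫ π1) s.snd).choose_spec
    refine hQ.ext ?_ ?_
    · rw [hl1, ← h1, ← Category.assoc, ht1]
    · rw [hl2, ht2]

namespace PreJCat

lemma fib_iso_comp (P : PreJCat C) {X Y Z : C} (e : X ⟶ Y) (g : Y ⟶ Z)
    [IsIso e] (hg : P.fib g) : P.fib (e ≫ g) :=
  P.fib_comp (P.iso_triv_fib e inferInstance).1 hg

/-- If both legs of a cospan of fibrations are fibrations, then in any pullback
square both projections are fibrations (not just the one provided by (J2)). -/
lemma fib_fst_of_isPullback (P : PreJCat C) {X Y Z W : C} {fb : W ⟶ X} {pb : W ⟶ Y}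
    {f : X ⟶ Z} {g : Y ⟶ Z} (hpb : IsPullback fb pb f g) (hf : P.fib f) (hg : P.fib g) :
    P.fib fb := by
  obtain ⟨W₂, fb₂, pb₂, hpb₂, hfib₂⟩ := P.pb_exists g f hg
  have hsnd := IsPullback.isoIsPullback_hom_snd _ _ hpb.flip hpb₂
  rw [← hsnd]
  refine P.fib_comp (P.iso_triv_fib _ ?_).1 hfib₂
  infer_instance

/-- The key lifting lemma: given a fibration `q`, a weak equivalence `w : A ⟶ A'`
and a strict lift over `A`, one can lift over `A'` (all objects cofibrant models). -/
lemma liftStep (P : PreJCat C) (hc : ∀ X : C, P.CofModel X) {A A' Y Z : C}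
    (w : A ⟶ A') (q : Y ⟶ Z) (m : A' ⟶ Z) (u : A ⟶ Y)
    (hw : P.weq w) (hq : P.fib q) (hcomm : u ≫ q = w ≫ m) :
    ∃ t : A' ⟶ Y, t ≫ q = m := by
  obtain ⟨Pb, fb, pb, hpb, hfib⟩ := P.pb_exists q m hq
  obtain ⟨W, τ₃, q₃, hτ₃, hq₃, hfac⟩ := P.F_fac (hpb.lift u w hcomm)
  have hqq : P.fib (q₃ ≫ pb) := P.fib_comp hq₃ hfib
  have hww : P.weq (q₃ ≫ pb) := by
    refine P.weq_of_comp_right hτ₃ ?_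
    have : τ₃ ≫ q₃ ≫ pb = w := by
      rw [← Category.assoc, hfac, hpb.lift_snd]
    rwa [this]
  obtain ⟨s, hs⟩ := hc A' (q₃ ≫ pb) hqq hww
  refine ⟨s ≫ q₃ ≫ fb, ?_⟩
  calc (s ≫ q₃ ≫ fb) ≫ q = s ≫ q₃ ≫ fb ≫ q := by simp only [Category.assoc]
    _ = s ≫ q₃ ≫ pb ≫ m := by rw [hpb.w]
    _ = (s ≫ (q₃ ≫ pb)) ≫ m := by simp only [Category.assoc]
    _ = m := by rw [hs, Category.id_comp]

/-- Main induction: from an `n`-th iterated join of `p` one constructs an `n`-th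
fat wedge of `p ≫ τ` together with a strict comparison morphism. -/
lemma mainInduction (P : PreJCat C) {E B F : C} (p : E ⟶ B) (τ : B ⟶ F)
    (hF : P.EFibrant F) {n : ℕ} {X : C} {h : X ⟶ B} (hiter : P.IsIterJoin p n h) :
    ∃ (T Pn : C) (j : T ⟶ Pn) (Δ : F ⟶ Pn), P.IsFatWedge (p ≫ τ) n j Δ ∧
      P.fib (0 : Pn ⟶ 0) ∧ ∃ ℓ : X ⟶ T, ℓ ≫ j = h ≫ τ ≫ Δ := by
  induction hiter with
  | zero =>
      exact ⟨E, F, p ≫ τ, 𝟙 F, IsFatWedge.zero, hF, 𝟙 E, by simp⟩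
  | @succ n X Y h h' hprev hjoin ih =>
      obtain ⟨T, Pn, j, Δ, hfw, hPnFib, ℓ, hℓ⟩ := ih
      obtain ⟨Ep, τp, qp, hτp, hqp, hfacp, D, Zp, fbarp, pbarp, ip, σp, ap, bp,
        hpbD, hip, hσp, hifac, hpoX, hah, hbh⟩ := hjoin
      -- products
      obtain ⟨Pn1, pr1, pr2, hPn1pb, hpr2fib⟩ :=
        P.pb_exists (0 : Pn ⟶ 0) (0 : F ⟶ 0) hPnFib
      have hPprod : IsBinProd pr1 pr2 := isBinProd_of_isPullback_zero hPn1pb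
      have hPn1Fib : P.fib (0 : Pn1 ⟶ 0) := by
        rw [show (0 : Pn1 ⟶ 0) = pr2 ≫ (0 : F ⟶ 0) from eqToZero _ _]
        exact P.fib_comp hpr2fib hF
      obtain ⟨TB, q2, q1, hTBpb, hq1fib⟩ := P.pb_exists (0 : F ⟶ 0) (0 : T ⟶ 0) hF
      have hTBprod : IsBinProd q1 q2 := isBinProd_of_isPullback_zero hTBpb.flip
      obtain ⟨PE, r1, r2, hPEpb, hr2fib⟩ := P.pb_exists (0 : Pn ⟶ 0) (0 : E ⟶ 0) hPnFib
      have hPEprod : IsBinProd r1 r2 := isBinProd_of_isPullback_zero hPEpb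
      -- the structure morphisms of the fat wedge step
      obtain ⟨jB, hjB1, hjB2⟩ := hPprod.lift' (q1 ≫ j) q2
      obtain ⟨pP, hpP1, hpP2⟩ := hPprod.lift' r1 (r2 ≫ (p ≫ τ))
      obtain ⟨Δ', hΔ'1, hΔ'2⟩ := hPprod.lift' Δ (𝟙 F)
      -- F-factorization of pP through `Pn1 ×_F M₀`
      obtain ⟨M₀, τ₂, q₂, hτ₂, hq₂, hfac₂⟩ := P.F_fac (qp ≫ τ)
      obtain ⟨PM, fbM, qg, hPMpb, hqgfib⟩ := P.pb_exists q₂ pr2 hq₂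
      have hfbMfib : P.fib fbM := P.fib_fst_of_isPullback hPMpb hq₂ hpr2fib
      have hτgcomm : (r2 ≫ τp ≫ τ₂) ≫ q₂ = pP ≫ pr2 := by
        simp only [Category.assoc, hfac₂, hpP2]
        rw [reassoc_of% hfacp]
      set τg : PE ⟶ PM := hPMpb.lift (r2 ≫ τp ≫ τ₂) pP hτgcomm with hτgdef
      have hτg1 : τg ≫ fbM = r2 ≫ τp ≫ τ₂ := hPMpb.lift_fst _ _ _
      have hτg2 : τg ≫ qg = pP := hPMpb.lift_snd _ _ _
      have hτgweq : P.weq τg := by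
        have hbig : IsPullback pP r2 pr2 (p ≫ τ) :=
          isPullback_of_binProds hPprod hPEprod (p ≫ τ) hpP1 hpP2
        have hbig' : IsPullback (τg ≫ qg) r2 pr2 ((τp ≫ τ₂) ≫ q₂) := by
          rw [hτg2, Category.assoc, hfac₂, ← Category.assoc, hfacp]
          exact hbig
        have hleft : IsPullback τg r2 fbM (τp ≫ τ₂) :=
          IsPullback.of_right hbig' (by rw [hτg1]) hPMpb.flip
        exact (P.pb_weq hfbMfib hleft).1 (P.weq_comp hτp hτ₂)
      -- pullback in the new join
      obtain ⟨E'', fbar, pbar, hE''pb, hpbarfib⟩ := P.pb_exists qg jB hqgfib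
      -- comparison map from X into TB
      obtain ⟨u₀, hu₀1, hu₀2⟩ := hTBprod.lift' ℓ (h ≫ τ)
      have uJB : u₀ ≫ jB = h ≫ τ ≫ Δ' := by
        refine hPprod.ext ?_ ?_
        · simp only [Category.assoc, hjB1, hΔ'1]
          rw [reassoc_of% hu₀1, hℓ]
        · simp only [Category.assoc, hjB2, hu₀2, hΔ'2, Category.comp_id]
      -- the map d : D ⟶ E''
      have hdPMcomm : (fbarp ≫ τ₂) ≫ q₂ = ((pbarp ≫ u₀) ≫ jB) ≫ pr2 := by
        simp only [Category.assoc, hfac₂, hjB2, hu₀2]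
        rw [reassoc_of% hpbD.w]
      set dPM : D ⟶ PM := hPMpb.lift (fbarp ≫ τ₂) ((pbarp ≫ u₀) ≫ jB) hdPMcomm with hdPMdef
      have hdPM1 : dPM ≫ fbM = fbarp ≫ τ₂ := hPMpb.lift_fst _ _ _
      have hdPM2 : dPM ≫ qg = (pbarp ≫ u₀) ≫ jB := hPMpb.lift_snd _ _ _
      set d : D ⟶ E'' := hE''pb.lift dPM (pbarp ≫ u₀) hdPM2 with hddef
      have hd1 : d ≫ fbar = dPM := hE''pb.lift_fst _ _ _
      have hd2 : d ≫ pbar = pbarp ≫ u₀ := hE''pb.lift_snd _ _ _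
      -- pushout Q of ip and d
      obtain ⟨Q, inlQ, inrQ, hpoQ, hinrQcof⟩ := P.po_exists ip d hip
      -- map Zp ⟶ PM
      have hzPMcomm : (σp ≫ τ₂) ≫ q₂ = (σp ≫ (qp ≫ τ ≫ Δ')) ≫ pr2 := by
        simp only [Category.assoc, hfac₂, hΔ'2, Category.comp_id]
      set zPM : Zp ⟶ PM := hPMpb.lift (σp ≫ τ₂) (σp ≫ (qp ≫ τ ≫ Δ')) hzPMcomm with hzPMdef
      have hzPM1 : zPM ≫ fbM = σp ≫ τ₂ := hPMpb.lift_fst _ _ _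
      have hzPM2 : zPM ≫ qg = σp ≫ (qp ≫ τ ≫ Δ') := hPMpb.lift_snd _ _ _
      -- the comparison of the two maps on D
      have hDagree : ip ≫ zPM = d ≫ fbar := by
        rw [hd1]
        refine hPMpb.hom_ext ?_ ?_  -- componentwise in the pullback PM
        · simp only [Category.assoc, hzPM1, hdPM1]
          rw [reassoc_of% hifac]
        · simp only [Category.assoc, hzPM2, hdPM2, uJB]
          rw [reassoc_of% hifac, reassoc_of% hpbD.w]
      -- the map φ : Q ⟶ PM and the C-factorization compatible with Zp
      set φ : Q ⟶ PM := hpoQ.desc zPM fbar hDagree with hφdef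
      have hφ1 : inlQ ≫ φ = zPM := hpoQ.inl_desc _ _ _
      have hφ2 : inrQ ≫ φ = fbar := hpoQ.inr_desc _ _ _
      obtain ⟨Z, i₂, σ, hi₂cof, hσweq, hfacσ⟩ := P.C_fac φ
      set i : E'' ⟶ Z := inrQ ≫ i₂ with hidef
      have hicof : P.cofib i := P.cofib_comp hinrQcof hi₂cof
      have hiσ : i ≫ σ = fbar := by rw [hidef, Category.assoc, hfacσ, hφ2]
      set w : Zp ⟶ Z := inlQ ≫ i₂ with hwdef
      have hwσ : w ≫ σ = zPM := by rw [hwdef, Category.assoc, hfacσ, hφ1]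
      have hiw : ip ≫ w = d ≫ i := by
        rw [hwdef, hidef, ← Category.assoc, hpoQ.w, Category.assoc]
      -- the pushout J and the join morphism j'
      obtain ⟨J, inlJ, inrJ, hpoJ, hinrJcof⟩ := P.po_exists i pbar hicof
      have hj'comm : i ≫ σ ≫ qg = pbar ≫ jB := by
        rw [← Category.assoc, hiσ, hE''pb.w]
      set j' : J ⟶ Pn1 := hpoJ.desc (σ ≫ qg) jB hj'comm with hj'def
      have hj'1 : inlJ ≫ j' = σ ≫ qg := hpoJ.inl_desc _ _ _
      have hj'2 : inrJ ≫ j' = jB := hpoJ.inr_desc _ _ _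
      have hjoin' : P.IsJoin jB pP j' :=
        ⟨PM, τg, qg, hτgweq, hqgfib, hτg2, E'', Z, fbar, pbar, i, σ, inrJ, inlJ,
          hE''pb, hicof, hσweq, hiσ, hpoJ.flip, hj'2, hj'1⟩
      have hfw' := IsFatWedge.succ hfw hPprod hTBprod hPEprod ⟨hjB1, hjB2⟩
        ⟨hpP1, hpP2⟩ hjoin' ⟨hΔ'1, hΔ'2⟩
      -- the comparison map ℓ' : Y ⟶ J
      have hℓ'comm : pbarp ≫ u₀ ≫ inrJ = ip ≫ w ≫ inlJ := by
        rw [← Category.assoc, ← hd2, Category.assoc, ← hpoJ.w, ← Category.assoc, ← hiw,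
          Category.assoc]
      set ℓ' : Y ⟶ J := hpoX.desc (u₀ ≫ inrJ) (w ≫ inlJ) hℓ'comm with hℓ'def
      have hℓ'1 : ap ≫ ℓ' = u₀ ≫ inrJ := hpoX.inl_desc _ _ _
      have hℓ'2 : bp ≫ ℓ' = w ≫ inlJ := hpoX.inr_desc _ _ _
      refine ⟨J, Pn1, j', Δ', hfw', hPn1Fib, ℓ', ?_⟩
      refine hpoX.hom_ext ?_ ?_
      · rw [reassoc_of% hℓ'1, hj'2, uJB, reassoc_of% hah]
      · rw [reassoc_of% hℓ'2, hj'1, reassoc_of% hwσ, hzPM2, reassoc_of% hbh]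

end PreJCat

end Auxiliary

/-- In a category satisfying (J1)-(J4) (but not necessarily the
cube axiom), `Wsecat p ≤ Gsecat p` for any morphism `p`. -/
theorem Wsecat_le_Gsecat (P : PreJCat C)
    (hc : ∀ X : C, P.CofModel X)
    {E B : C} (p : E ⟶ B) :
    P.Wsecat p ≤ P.Gsecat p := by
  refine le_sInf ?_
  rintro b ⟨m, rfl, X, h, hiter, hsec⟩
  -- an e-fibrant replacement of B
  obtain ⟨F, τ, q0, hτ, hq0, hfac0⟩ := P.F_fac (0 : B ⟶ 0)
  have hF : P.EFibrant F := by
    have : (0 : F ⟶ 0) = q0 := eqToZero _ _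
    unfold PreJCat.EFibrant
    rw [this]; exact hq0
  have step1 : P.Wsecat p ≤ P.WsecatE (p ≫ τ) :=
    iInf_le_of_le F (iInf_le_of_le τ (iInf_le_of_le ⟨hτ, hF⟩ le_rfl))
  refine step1.trans ?_
  refine sInf_le ⟨m, rfl, ?_⟩
  obtain ⟨T, Pn, j, Δ, hfw, hPnfib, ℓ, hℓ⟩ := P.mainInduction p τ hF hiter
  refine ⟨T, Pn, j, Δ, hfw, ?_⟩
  -- build the weak lifting of Δ along j
  obtain ⟨E', τ', q', hτ', hq', hfacj⟩ := P.F_fac j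
  obtain ⟨Eh, σh, qh, hσh, hqh, hfach, s, hs⟩ := hsec
  obtain ⟨t1, ht1⟩ := P.liftStep hc σh q' (qh ≫ τ ≫ Δ) (ℓ ≫ τ') hσh hq'
    (by simp only [Category.assoc, hfacj]; rw [hℓ, reassoc_of% hfach])
  obtain ⟨t2, ht2⟩ := P.liftStep hc τ q' Δ (s ≫ t1) hτ hq'
    (by simp only [Category.assoc, ht1]; rw [reassoc_of% hs])
  exact ⟨E', τ', q', hτ', hq', hfacj, t2, ht2⟩
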